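/- In a two-resource RSG where both resources are type 1, let a be a Nash equilibrium with |a_i| = q_i and |a_{i'}| = q_{i'} - 1 for the two resources i, i'. Then for any coalition c, a is c-stable if and only if: (C1) if |a_{i'} ∩ c| = 0 then |a_i ∩ c| ≤ 1; (C2) if β_i = β_{i'} and |a_{i'} ∩ c| > 0 then |a_i ∩ c| ≤ |a_{i'} ∩ c| + 1; (C3) if β_i < β_{i'} and |a_{i'} ∩ c| > 0 then |a_i ∩ c| ≤ |a_{i'} ∩ c|. -/

import Mathlib

variable {N M : Type*}

/-- Number of agents assigned to resource `i` at allocation `a`. -/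
def load [Fintype N] [DecidableEq M] (a : N → M) (i : M) : ℕ :=
  (Finset.univ.filter (fun j => a j = i)).card

/-- The cost incurred by agent `j` at allocation `a` for cost profile `f`. -/
def cost [Fintype N] [DecidableEq M] (f : M → ℕ → ℕ) (a : N → M) (j : N) : ℕ :=
  f (a j) (load a (a j))

/-- The maximum cost over resources at allocation `a`. -/
def maxcost [Fintype N] [Fintype M] [DecidableEq M] (f : M → ℕ → ℕ) (a : N → M) : ℕ :=
  Finset.univ.sup (fun i => f i (load a i))

/-- The minmaxcost `α` of the RSG: minimum over allocations of the maxcost. -/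
noncomputable def minmax (N : Type*) [Fintype N] [Fintype M] [DecidableEq M] (f : M → ℕ → ℕ) : ℕ :=
  sInf (Set.range (maxcost (N := N) f))

/-- The quota of resource `i`: the largest `t` with `f i t ≤ α`. -/
noncomputable def quota (f : M → ℕ → ℕ) (α : ℕ) (i : M) : ℕ :=
  sSup {t | f i t ≤ α}

/-- `a` is a Nash equilibrium: no single agent can strictly decrease its cost
by switching to another resource. -/
def Nash [Fintype N] [DecidableEq M] (f : M → ℕ → ℕ) (a : N → M) : Prop :=
  ∀ j : N, ∀ i : M, i ≠ a j → cost f a j ≤ f i (load a i + 1)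

/-- `a` is `c`-stable: coalition `c` has no deviation making every member weakly
better off and some member strictly better off. -/
def cStable [Fintype N] [DecidableEq N] [DecidableEq M]
    (f : M → ℕ → ℕ) (a : N → M) (c : Finset N) : Prop :=
  ¬ ∃ b : N → M, (∀ j ∉ c, b j = a j) ∧
      (∀ j ∈ c, cost f b j ≤ cost f a j) ∧ (∃ j ∈ c, cost f b j < cost f a j)

private lemma fin2_iff : ∀ {i i' m : Fin 2}, i ≠ i' → (¬ m = i ↔ m = i') := by decide

private lemma filter_partition [DecidableEq N] (s : Finset N) (b : N → Fin 2) {i i' : Fin 2}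
    (h : i ≠ i') :
    (s.filter fun j => b j = i).card + (s.filter fun j => b j = i').card = s.card := by
  have he : (s.filter fun j => b j = i') = s.filter (fun j => ¬ b j = i) := by
    apply Finset.filter_congr
    intro j _
    exact (fin2_iff h).symm
  rw [he]
  exact Finset.card_filter_add_card_filter_not (p := fun j => b j = i)

private lemma filter_split [Fintype N] [DecidableEq N] (b : N → Fin 2) (c : Finset N) (m : Fin 2) :
    load b m = (c.filter fun j => b j = m).card
      + ((Finset.univ \ c).filter fun j => b j = m).card := by
  unfold load
  rw [← Finset.card_union_of_disjoint
      (Finset.disjoint_filter_filter Finset.disjoint_sdiff),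
    ← Finset.filter_union, Finset.union_sdiff_of_subset (Finset.subset_univ c)]

/-- In a two-resource RSG with both resources of type 1, at a Nash equilibrium `a` with
`|a_i| = q_i` and `|a_{i'}| = q_{i'} - 1`, coalition `c` has no profitable deviation iff
conditions C1, C2, C3 hold. -/
theorem two_resource_stability_characterization [Fintype N] [DecidableEq N]
    (f : Fin 2 → ℕ → ℕ) (hmono : ∀ i, StrictMono (f i)) (hzero : ∀ i, f i 0 = 0)
    (htype1 : ∀ i : Fin 2,
      f i (quota f (minmax N f) i) = minmax N f)
    (i i' : Fin 2) (hii' : i ≠ i')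
    (a : N → Fin 2) (hNash : Nash f a)
    (hi : load a i = quota f (minmax N f) i)
    (hi' : load a i' = quota f (minmax N f) i' - 1)
    (c : Finset N) :
    cStable f a c ↔
      (((c.filter (fun j => a j = i')).card = 0 →
          (c.filter (fun j => a j = i)).card ≤ 1) ∧
       (f i (quota f (minmax N f) i - 1) = f i' (quota f (minmax N f) i' - 1) →
          0 < (c.filter (fun j => a j = i')).card →
          (c.filter (fun j => a j = i)).card ≤ (c.filter (fun j => a j = i')).card + 1) ∧
       (f i (quota f (minmax N f) i - 1) < f i' (quota f (minmax N f) i' - 1) →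
          0 < (c.filter (fun j => a j = i')).card →
          (c.filter (fun j => a j = i)).card ≤ (c.filter (fun j => a j = i')).card)) := by
  classical
  set α := minmax N f with hαdef
  set qi := quota f α i with hqidef
  set qi' := quota f α i' with hqi'def
  have hfi : f i qi = α := htype1 i
  have hfi' : f i' qi' = α := htype1 i'
  have htwo : ∀ m : Fin 2, m = i ∨ m = i' := fun m => by
    by_cases h : m = i
    · exact Or.inl h
    · exact Or.inr ((fin2_iff hii').mp h)
  set x := (c.filter fun j => a j = i).card with hxdef
  set y := (c.filter fun j => a j = i').card with hydef
  rcases Nat.eq_zero_or_pos α with h0 | hpos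
  · -- degenerate case: α = 0, everything empty
    have hq : qi = 0 := by
      by_contra h
      have h1 : f i 0 < f i qi := hmono i (Nat.pos_of_ne_zero h)
      rw [hzero i, hfi] at h1
      omega
    have hq' : qi' = 0 := by
      by_contra h
      have h1 : f i' 0 < f i' qi' := hmono i' (Nat.pos_of_ne_zero h)
      rw [hzero i', hfi'] at h1
      omega
    have h1 : (Finset.univ.filter fun j => a j = i) = ∅ := by
      apply Finset.card_eq_zero.mp
      have : load a i = 0 := by rw [hi, hq]
      exact this
    have h2 : (Finset.univ.filter fun j => a j = i') = ∅ := by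
      apply Finset.card_eq_zero.mp
      have : load a i' = 0 := by rw [hi', hq']
      exact this
    have hcempty : c = ∅ := by
      apply Finset.eq_empty_of_forall_notMem
      intro j hj
      rcases htwo (a j) with h | h
      · have : j ∈ (Finset.univ.filter fun j => a j = i) := by
          simp [Finset.mem_filter, h]
        rw [h1] at this; simp at this
      · have : j ∈ (Finset.univ.filter fun j => a j = i') := by
          simp [Finset.mem_filter, h]
        rw [h2] at this; simp at this
    have hx0 : x = 0 := by rw [hxdef, hcempty]; simp
    have hy0 : y = 0 := by rw [hydef, hcempty]; simp
    constructor
    · intro _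
      refine ⟨fun _ => by omega, fun _ _ => by omega, fun _ _ => by omega⟩
    · rintro _ ⟨b, _, _, j, hj, _⟩
      rw [hcempty] at hj
      simp at hj
  -- main case : α > 0
  have hqi1 : 1 ≤ qi := by
    by_contra h
    have : qi = 0 := by omega
    rw [this, hzero i] at hfi
    omega
  have hqi'1 : 1 ≤ qi' := by
    by_contra h
    have : qi' = 0 := by omega
    rw [this, hzero i'] at hfi'
    omega
  have hβ : f i (qi - 1) < α := by
    rw [← hfi]; exact hmono i (by omega)
  have hβ' : f i' (qi' - 1) < α := by
    rw [← hfi']; exact hmono i' (by omega)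
  have hxle : x ≤ qi := by
    rw [← hi]
    exact Finset.card_le_card (Finset.filter_subset_filter _ (Finset.subset_univ c))
  have hyle : y ≤ qi' - 1 := by
    rw [← hi']
    exact Finset.card_le_card (Finset.filter_subset_filter _ (Finset.subset_univ c))
  have hxy : x + y = c.card := filter_partition c a hii'
  have hloadsum : ∀ b : N → Fin 2, load b i + load b i' = Fintype.card N := by
    intro b
    have := filter_partition Finset.univ b hii'
    rw [Finset.card_univ] at this
    exact this
  have hN : Fintype.card N + 1 = qi + qi' := by
    have := hloadsum a
    rw [hi, hi'] at this
    omega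
  -- old cost computations
  have holdi : ∀ j, a j = i → cost f a j = α := by
    intro j h; simp only [cost, h, hi, hfi]
  have holdi' : ∀ j, a j = i' → cost f a j = f i' (qi' - 1) := by
    intro j h; simp only [cost, h, hi']
  constructor
  · -- cStable → conditions
    intro hstab
    have devA : y = 0 → 2 ≤ x → False := by
      intro hy0 hx2
      obtain ⟨j0, hj0⟩ := Finset.card_pos.mp (show 0 < (c.filter fun j => a j = i).card by omega)
      have hj0c := (Finset.mem_filter.mp hj0).1
      have hj0a := (Finset.mem_filter.mp hj0).2
      set b := Function.update a j0 i' with hbdef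
      have hfil : (Finset.univ.filter fun j => b j = i')
          = insert j0 (Finset.univ.filter fun j => a j = i') := by
        ext j
        simp only [Finset.mem_filter, Finset.mem_univ, true_and, Finset.mem_insert]
        rcases eq_or_ne j j0 with rfl | hne
        · simp [hbdef]
        · simp [hbdef, Function.update_of_ne hne, hne]
      have hj0ni : j0 ∉ (Finset.univ.filter fun j => a j = i') := by
        simp only [Finset.mem_filter, Finset.mem_univ, true_and, hj0a]
        exact hii'
      have hL' : load b i' = qi' := by
        show (Finset.univ.filter fun j => b j = i').card = qi'
        rw [hfil, Finset.card_insert_of_notMem hj0ni]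
        have h3 : (Finset.univ.filter fun j => a j = i').card = load a i' := rfl
        rw [h3, hi']
        omega
      have hL : load b i = qi - 1 := by
        have := hloadsum b
        rw [hL'] at this
        have h4 := hloadsum a
        rw [hi, hi'] at h4
        omega
      have hac : ∀ j ∈ c, a j = i := by
        intro j hjc
        rcases htwo (a j) with h | h
        · exact h
        · exfalso
          have hmem : j ∈ c.filter fun j => a j = i' := Finset.mem_filter.mpr ⟨hjc, h⟩
          have he : (c.filter fun j => a j = i') = ∅ := Finset.card_eq_zero.mp hy0
          rw [he] at hmem; simp at hmem
      apply hstab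
      refine ⟨b, ?_, ?_, ?_⟩
      · intro j hjc
        refine Function.update_of_ne (fun h => hjc ?_) _ _
        rw [h]; exact hj0c
      · intro j hjc
        rcases eq_or_ne j j0 with rfl | hne
        · have hbj : b j = i' := by simp [hbdef]
          have : cost f b j = α := by simp only [cost, hbj, hL', hfi']
          rw [this, holdi j hj0a]
        · have hbj : b j = i := by
            rw [hbdef, Function.update_of_ne hne, hac j hjc]
          have : cost f b j = f i (qi - 1) := by simp only [cost, hbj, hL]
          rw [this, holdi j (hac j hjc)]
          exact le_of_lt hβ
      · obtain ⟨j1, hj1mem, hj1ne⟩ :=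
          Finset.exists_mem_ne (show 1 < (c.filter fun j => a j = i).card by omega) j0
        have hj1c := (Finset.mem_filter.mp hj1mem).1
        have hj1a := (Finset.mem_filter.mp hj1mem).2
        have hbj : b j1 = i := by
          rw [hbdef, Function.update_of_ne hj1ne, hj1a]
        refine ⟨j1, hj1c, ?_⟩
        have : cost f b j1 = f i (qi - 1) := by simp only [cost, hbj, hL]
        rw [this, holdi j1 hj1a]
        exact hβ
    have devB : f i (qi - 1) ≤ f i' (qi' - 1) → 0 < y → y + 1 ≤ x →
        (f i (qi - 1) < f i' (qi' - 1) ∨ y + 2 ≤ x) → False := by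
      intro hle hy0 hxylt hsc
      obtain ⟨S, hSsub, hScard⟩ :=
        Finset.exists_subset_card_eq (s := c.filter fun j => a j = i) (n := y + 1) (by omega)
      set b : N → Fin 2 := fun j => if j ∈ S then i' else if j ∈ c ∧ a j = i' then i else a j
        with hbdef
      have hSc : ∀ j ∈ S, j ∈ c ∧ a j = i := by
        intro j hj
        have := hSsub hj
        exact Finset.mem_filter.mp this
      have hoff : ∀ j ∉ c, b j = a j := by
        intro j hj
        have hjS : j ∉ S := fun h => hj (hSc j h).1
        simp [hbdef, hjS, hj]
      have hfil' : (Finset.univ.filter fun j => b j = i')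
          = S ∪ ((Finset.univ.filter fun j => a j = i') \ c) := by
        ext j
        simp only [Finset.mem_filter, Finset.mem_univ, true_and, Finset.mem_union,
          Finset.mem_sdiff]
        by_cases hjS : j ∈ S
        · simp [hbdef, hjS]
        · by_cases hjc : j ∈ c ∧ a j = i'
          · have hbj : b j = i := by simp [hbdef, hjS, hjc]
            simp [hbj, hjS, hjc.1, hjc.2, hii']
          · have hbj : b j = a j := by simp [hbdef, hjS, hjc]
            rw [hbj]
            constructor
            · intro h
              exact Or.inr ⟨h, fun hc => hjc ⟨hc, h⟩⟩
            · rintro (h | ⟨h, _⟩)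
              · exact absurd h hjS
              · exact h
      have hdisj : Disjoint S ((Finset.univ.filter fun j => a j = i') \ c) :=
        Finset.disjoint_left.mpr fun j hjS hj2 => (Finset.mem_sdiff.mp hj2).2 (hSc j hjS).1
      have hsd : ((Finset.univ.filter fun j => a j = i') \ c)
          = (Finset.univ.filter fun j => a j = i') \ (c.filter fun j => a j = i') := by
        ext j
        simp only [Finset.mem_sdiff, Finset.mem_filter, Finset.mem_univ, true_and]
        tauto
      have hyload : y ≤ load a i' := by rw [hi']; exact hyle
      have hL' : load b i' = qi' := by
        show (Finset.univ.filter fun j => b j = i').card = qi'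
        rw [hfil', Finset.card_union_of_disjoint hdisj, hScard, hsd,
          Finset.card_sdiff_of_subset (Finset.filter_subset_filter _ (Finset.subset_univ c))]
        have h3 : (Finset.univ.filter fun j => a j = i').card = load a i' := rfl
        rw [h3, hi', ← hydef]
        omega
      have hL : load b i = qi - 1 := by
        have := hloadsum b
        rw [hL'] at this
        omega
      apply hstab
      refine ⟨b, hoff, ?_, ?_⟩
      · intro j hjc
        by_cases hjS : j ∈ S
        · have hbj : b j = i' := by simp [hbdef, hjS]
          have : cost f b j = α := by simp only [cost, hbj, hL', hfi']
          rw [this, holdi j (hSc j hjS).2]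
        · rcases htwo (a j) with hja | hja
          · have hbj : b j = i := by simp [hbdef, hjS, hja, hii']
            have : cost f b j = f i (qi - 1) := by simp only [cost, hbj, hL]
            rw [this, holdi j hja]
            exact le_of_lt hβ
          · have hbj : b j = i := by simp [hbdef, hjS, hjc, hja]
            have : cost f b j = f i (qi - 1) := by simp only [cost, hbj, hL]
            rw [this, holdi' j hja]
            exact hle
      · rcases hsc with hlt | hx2
        · obtain ⟨j2, hj2⟩ := Finset.card_pos.mp (show 0 < (c.filter fun j => a j = i').card from hy0)
          have hj2c := (Finset.mem_filter.mp hj2).1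
          have hj2a := (Finset.mem_filter.mp hj2).2
          have hj2S : j2 ∉ S := by
            intro h
            have := (hSc j2 h).2
            rw [this] at hj2a
            exact hii' hj2a
          have hbj : b j2 = i := by simp [hbdef, hj2S, hj2c, hj2a]
          refine ⟨j2, hj2c, ?_⟩
          have : cost f b j2 = f i (qi - 1) := by simp only [cost, hbj, hL]
          rw [this, holdi' j2 hj2a]
          exact hlt
        · have hpos : 0 < ((c.filter fun j => a j = i) \ S).card := by
            rw [Finset.card_sdiff_of_subset hSsub, hScard]
            omega
          obtain ⟨j1, hj1⟩ := Finset.card_pos.mp hpos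
          obtain ⟨hj1f, hj1S⟩ := Finset.mem_sdiff.mp hj1
          have hj1c := (Finset.mem_filter.mp hj1f).1
          have hj1a := (Finset.mem_filter.mp hj1f).2
          have hbj : b j1 = i := by simp [hbdef, hj1S, hj1a, hii']
          refine ⟨j1, hj1c, ?_⟩
          have : cost f b j1 = f i (qi - 1) := by simp only [cost, hbj, hL]
          rw [this, holdi j1 hj1a]
          exact hβ
    refine ⟨?_, ?_, ?_⟩
    · intro hy0
      by_contra h
      push_neg at h
      exact devA hy0 (by omega)
    · intro heq hy0
      by_contra h
      push_neg at h
      exact devB (le_of_eq heq) hy0 (by omega) (Or.inr (by omega))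
    · intro hlt hy0
      by_contra h
      push_neg at h
      exact devB (le_of_lt hlt) hy0 (by omega) (Or.inl hlt)
  · -- conditions → cStable
    rintro ⟨hC1, hC2, hC3⟩ ⟨b, hoff, hweak, j0, hj0c, hj0lt⟩
    set s := (c.filter fun j => b j = i).card with hsdef
    set s' := (c.filter fun j => b j = i').card with hs'def
    have hss' : s + s' = c.card := filter_partition c b hii'
    have hoffeq : ∀ m, ((Finset.univ \ c).filter fun j => b j = m).card
        = ((Finset.univ \ c).filter fun j => a j = m).card := by
      intro m
      congr 1
      apply Finset.filter_congr
      intro j hj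
      rw [hoff j (Finset.mem_sdiff.mp hj).2]
    have hLi : load b i + x = qi + s := by
      have e1 := filter_split b c i
      have e2 := filter_split a c i
      rw [hoffeq i] at e1
      rw [hi] at e2
      omega
    have hLi' : load b i' + y + 1 = qi' + s' := by
      have e1 := filter_split b c i'
      have e2 := filter_split a c i'
      rw [hoffeq i'] at e1
      rw [hi'] at e2
      omega
    have hcb : ∀ (j : N) (m : Fin 2), b j = m → cost f b j = f m (load b m) := by
      intro j m h; simp only [cost, h]
    have holda : ∀ j ∈ c, cost f a j ≤ α := by
      intro j hjc
      rcases htwo (a j) with h | h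
      · rw [holdi j h]
      · rw [holdi' j h]; exact le_of_lt hβ'
    have hupi : ∀ j ∈ c, b j = i → f i (load b i) ≤ α := by
      intro j hjc h
      rw [← hcb j i h]
      exact (hweak j hjc).trans (holda j hjc)
    have hupi' : ∀ j ∈ c, b j = i' → f i' (load b i') ≤ α := by
      intro j hjc h
      rw [← hcb j i' h]
      exact (hweak j hjc).trans (holda j hjc)
    have hfromi' : ∀ j ∈ c, a j = i' → b j = i → f i (load b i) ≤ f i' (qi' - 1) := by
      intro j hjc h1 h2
      rw [← hcb j i h2, ← holdi' j h1]
      exact hweak j hjc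
    have hfromi'2 : ∀ j ∈ c, a j = i' → b j = i' → f i' (load b i') ≤ f i' (qi' - 1) := by
      intro j hjc h1 h2
      rw [← hcb j i' h2, ← holdi' j h1]
      exact hweak j hjc
    rcases htwo (b j0) with hbj0 | hbj0
    · -- merged case: j0 ends on i
      have hs1 : 1 ≤ s :=
        Finset.card_pos.mpr ⟨j0, Finset.mem_filter.mpr ⟨hj0c, hbj0⟩⟩
      have hstrict : f i (load b i) < α := by
        rcases htwo (a j0) with h | h
        · rw [← hcb j0 i hbj0, ← holdi j0 h]
          exact hj0lt
        · refine lt_trans ?_ hβ'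
          rw [← hcb j0 i hbj0, ← holdi' j0 h]
          exact hj0lt
      have hlbi : load b i < qi := by
        rw [← hfi] at hstrict
        exact (hmono i).lt_iff_lt.mp hstrict
      have hsx : s < x := by omega
      have hs'pos : 0 < s' := by omega
      obtain ⟨j1, hj1⟩ := Finset.card_pos.mp hs'pos
      have hub' : f i' (load b i') ≤ α :=
        hupi' j1 (Finset.mem_filter.mp hj1).1 (Finset.mem_filter.mp hj1).2
      have hlbi' : load b i' ≤ qi' := by
        rw [← hfi'] at hub'
        exact (hmono i').le_iff_le.mp hub'
      have hs'eq : s' = y + 1 := by omega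
      have hLbi' : load b i' = qi' := by omega
      have hsub : (c.filter fun j => a j = i') ⊆ (c.filter fun j => b j = i) := by
        intro j2 hj2
        obtain ⟨hj2c, hj2a⟩ := Finset.mem_filter.mp hj2
        refine Finset.mem_filter.mpr ⟨hj2c, ?_⟩
        rcases htwo (b j2) with h | h
        · exact h
        · exfalso
          have h5 := hfromi'2 j2 hj2c hj2a h
          rw [hLbi'] at h5
          have h6 : qi' ≤ qi' - 1 := (hmono i').le_iff_le.mp h5
          omega
      have hys : y ≤ s := Finset.card_le_card hsub
      rcases Nat.eq_zero_or_pos y with hy0 | hy0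
      · have := hC1 hy0
        omega
      · obtain ⟨j2, hj2⟩ := Finset.card_pos.mp hy0
        obtain ⟨hj2c, hj2a⟩ := Finset.mem_filter.mp hj2
        have hbj2 : b j2 = i := (Finset.mem_filter.mp (hsub hj2)).2
        have hle : f i (qi - 1) ≤ f i' (qi' - 1) := by
          have h7 := hfromi' j2 hj2c hj2a hbj2
          rwa [show load b i = qi - 1 by omega] at h7
        rcases lt_trichotomy (f i (qi - 1)) (f i' (qi' - 1)) with h3 | h3 | h3
        · have := hC3 h3 hy0
          omega
        · have hx1 := hC2 h3 hy0
          rcases htwo (a j0) with haj0 | haj0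
          · have hj0ni : j0 ∉ (c.filter fun j => a j = i') := by
              simp only [Finset.mem_filter, haj0]
              exact fun h => hii' h.2
            have hins : insert j0 (c.filter fun j => a j = i') ⊆ (c.filter fun j => b j = i) := by
              intro j hj
              rcases Finset.mem_insert.mp hj with rfl | hj
              · exact Finset.mem_filter.mpr ⟨hj0c, hbj0⟩
              · exact hsub hj
            have hcard := Finset.card_le_card hins
            rw [Finset.card_insert_of_notMem hj0ni] at hcard
            omega
          · have h4 : f i (load b i) < f i' (qi' - 1) := by
              rw [← hcb j0 i hbj0, ← holdi' j0 haj0]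
              exact hj0lt
            rw [show load b i = qi - 1 by omega, ← h3] at h4
            exact lt_irrefl _ h4
        · omega
    · -- j0 ends on i'
      have hs'1 : 1 ≤ s' :=
        Finset.card_pos.mpr ⟨j0, Finset.mem_filter.mpr ⟨hj0c, hbj0⟩⟩
      rcases htwo (a j0) with haj0 | haj0
      · -- from i, on i'
        have hstrict : f i' (load b i') < α := by
          rw [← hcb j0 i' hbj0, ← holdi j0 haj0]
          exact hj0lt
        have hlb : load b i' < qi' := by
          rw [← hfi'] at hstrict
          exact (hmono i').lt_iff_lt.mp hstrict
        have hs'y : s' ≤ y := by omega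
        have hx1 : 1 ≤ x :=
          Finset.card_pos.mpr ⟨j0, Finset.mem_filter.mpr ⟨hj0c, haj0⟩⟩
        have hs1 : 1 ≤ s := by omega
        obtain ⟨j1, hj1⟩ := Finset.card_pos.mp hs1
        have hub : f i (load b i) ≤ α :=
          hupi j1 (Finset.mem_filter.mp hj1).1 (Finset.mem_filter.mp hj1).2
        have hlbi : load b i ≤ qi := by
          rw [← hfi] at hub
          exact (hmono i).le_iff_le.mp hub
        have hLbi : load b i = qi := by omega
        have hs'eq : s' = y := by omega
        by_cases hall : (c.filter fun j => a j = i') ⊆ (c.filter fun j => b j = i')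
        · have heq := Finset.eq_of_subset_of_card_le hall (by omega)
          have : j0 ∈ (c.filter fun j => a j = i') := by
            rw [heq]
            exact Finset.mem_filter.mpr ⟨hj0c, hbj0⟩
          have := (Finset.mem_filter.mp this).2
          rw [haj0] at this
          exact hii' this
        · obtain ⟨j2, hj2mem, hj2not⟩ := Finset.not_subset.mp hall
          obtain ⟨hj2c, hj2a⟩ := Finset.mem_filter.mp hj2mem
          have hbj2 : b j2 = i := by
            rcases htwo (b j2) with h | h
            · exact h
            · exact absurd (Finset.mem_filter.mpr ⟨hj2c, h⟩) hj2not
          have h5 := hfromi' j2 hj2c hj2a hbj2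
          rw [hLbi, hfi] at h5
          omega
      · -- from i', on i'
        have hstrict : f i' (load b i') < f i' (qi' - 1) := by
          rw [← hcb j0 i' hbj0, ← holdi' j0 haj0]
          exact hj0lt
        have hlb : load b i' < qi' - 1 := (hmono i').lt_iff_lt.mp hstrict
        have hs'y : s' < y := by omega
        have hs1 : 1 ≤ s := by omega
        obtain ⟨j1, hj1⟩ := Finset.card_pos.mp hs1
        have hub : f i (load b i) ≤ α :=
          hupi j1 (Finset.mem_filter.mp hj1).1 (Finset.mem_filter.mp hj1).2
        have hlbi : load b i ≤ qi := by
          rw [← hfi] at hub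
          exact (hmono i).le_iff_le.mp hub
        omega
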